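/- Let G be a countable discrete group and suppose there exist elements g₁, g₂, …, g_n ∈ G such that ‖λ(g₁) + λ(g₂) + ⋯ + λ(g_n)‖ / n < 1, where λ is the left regular representation of G on ℓ²(G) and ‖·‖ is the operator norm on B(ℓ²(G)). Then G is not amenable. -/

import Mathlib

open scoped BigOperators ENNReal

variable {G : Type*} [Group G]

/-- ℓ²(G) with complex coefficients. -/
abbrev L2 (G : Type*) : Type _ := lp (fun _ : G => ℂ) 2

lemma memℓp_translate (g : G) (f : L2 G) : Memℓp (fun h => f (g⁻¹ * h)) 2 := by
  apply memℓp_gen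
  have h2 : (0:ℝ) < (2 : ℝ≥0∞).toReal := by norm_num
  have := (memℓp_gen_iff h2).1 (lp.memℓp f)
  exact ((Equiv.mulLeft g⁻¹).summable_iff
    (f := fun h => ‖f h‖ ^ (2 : ℝ≥0∞).toReal)).2 this

/-- The left regular representation of `G` on `ℓ²(G)`, as a linear isometry equivalence. -/
noncomputable def lamEquiv (g : G) : L2 G ≃ₗᵢ[ℂ] L2 G where
  toFun f := ⟨fun h => f (g⁻¹ * h), memℓp_translate g f⟩
  invFun f := ⟨fun h => f (g * h), by
    have := memℓp_translate g⁻¹ f; simp only [inv_inv] at this; exact this⟩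
  map_add' f₁ f₂ := by ext h; simp [lp.coeFn_add]; rfl
  map_smul' c f := by ext h; simp [lp.coeFn_smul]
  left_inv f := by ext h; simp
  right_inv f := by ext h; simp
  norm_map' f := by
    have h2 : (0:ℝ) < (2 : ℝ≥0∞).toReal := by norm_num
    rw [lp.norm_eq_tsum_rpow h2, lp.norm_eq_tsum_rpow h2]
    congr 1
    exact ((Equiv.mulLeft g⁻¹).tsum_eq
      (f := fun h => ‖f h‖ ^ (2 : ℝ≥0∞).toReal))

/-- The left regular representation as bounded operators. -/
noncomputable def lam (g : G) : L2 G →L[ℂ] L2 G :=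
  (lamEquiv g).toContinuousLinearEquiv.toContinuousLinearMap

/-- δ_g, the canonical basis vector of ℓ²(G). -/
noncomputable def delta (g : G) : L2 G :=
  haveI := Classical.decEq G
  lp.single 2 g (1 : ℂ)

/-- The closed subspace spanned by the δ_w, w ∈ S. -/
noncomputable def spanH (S : Set G) : Submodule ℂ (L2 G) :=
  (Submodule.span ℂ (delta '' S)).topologicalClosure

/-- Orthogonal projection onto the closed span of {δ_w : w ∈ S}, as an operator on ℓ²(G). -/
noncomputable def projH (S : Set G) : L2 G →L[ℂ] L2 G :=
  haveI : CompleteSpace (spanH S) :=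
    (Submodule.isClosed_topologicalClosure _).completeSpace_coe
  (spanH S).subtypeL.comp ((spanH S).orthogonalProjectionOnto)

abbrev L1 (G : Type*) : Type _ := lp (fun _ : G => ℝ) 1

lemma memℓp_translate_one (g : G) (f : L1 G) : Memℓp (fun h => f (g⁻¹ * h)) 1 := by
  apply memℓp_gen
  have h1 : (0:ℝ) < (1 : ℝ≥0∞).toReal := by norm_num
  have := (memℓp_gen_iff h1).1 (lp.memℓp f)
  exact ((Equiv.mulLeft g⁻¹).summable_iff
    (f := fun h => ‖f h‖ ^ (1 : ℝ≥0∞).toReal)).2 this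

noncomputable def trans1 (g : G) : L1 G ≃ₗᵢ[ℝ] L1 G where
  toFun f := ⟨fun h => f (g⁻¹ * h), memℓp_translate_one g f⟩
  invFun f := ⟨fun h => f (g * h), by
    have := memℓp_translate_one g⁻¹ f; simp only [inv_inv] at this; exact this⟩
  map_add' f₁ f₂ := by ext h; simp [lp.coeFn_add]; rfl
  map_smul' c f := by ext h; simp [lp.coeFn_smul]
  left_inv f := by ext h; simp
  right_inv f := by ext h; simp
  norm_map' f := by
    have h1 : (0:ℝ) < (1 : ℝ≥0∞).toReal := by norm_num
    rw [lp.norm_eq_tsum_rpow h1, lp.norm_eq_tsum_rpow h1]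
    congr 1
    exact ((Equiv.mulLeft g⁻¹).tsum_eq
      (f := fun h => ‖f h‖ ^ (1 : ℝ≥0∞).toReal))

@[simp] lemma trans1_apply (g : G) (f : L1 G) (h : G) : (trans1 g f) h = f (g⁻¹ * h) := rfl

noncomputable def delta1 (x : G) : L1 G :=
  haveI := Classical.decEq G
  lp.single 1 x (1 : ℝ)

lemma delta1_apply_self (x : G) : (delta1 x) x = 1 := by
  letI := Classical.decEq G
  exact lp.single_apply_self (E := fun _ : G => ℝ) 1 x (1:ℝ)

lemma delta1_apply_ne {x y : G} (h : y ≠ x) : (delta1 x) y = 0 := by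
  letI := Classical.decEq G
  exact lp.single_apply_ne (E := fun _ : G => ℝ) 1 x (1:ℝ) h

lemma trans1_delta1 (g : G) (x : G) : trans1 g (delta1 x) = delta1 (g * x) := by
  ext y
  rw [trans1_apply]
  by_cases h : y = g * x
  · subst h
    rw [delta1_apply_self, show g⁻¹ * (g * x) = x by group, delta1_apply_self]
  · rw [delta1_apply_ne h, delta1_apply_ne]
    intro hc
    exact h (by rw [← hc]; group)

lemma summable_of_L1 (f : L1 G) : Summable fun x => ‖f x‖ := by
  have := (lp.memℓp f).summable (by norm_num : (0:ℝ) < (1:ℝ≥0∞).toReal)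
  simpa using this

def probSet (G : Type*) [Group G] : Set (L1 G) := {f | (∀ x, 0 ≤ f x) ∧ ∑' x, f x = 1}

lemma delta1_mem_probSet (x : G) : delta1 x ∈ probSet G := by
  constructor
  · intro y
    by_cases h : y = x
    · subst h; rw [delta1_apply_self]; norm_num
    · rw [delta1_apply_ne h]
  · calc ∑' y, (delta1 x) y = (delta1 x) x :=
        tsum_eq_single x (fun y hy => delta1_apply_ne hy)
      _ = 1 := delta1_apply_self x

lemma convex_probSet : Convex ℝ (probSet G) := by
  intro f hf h hh a b ha hb hab
  have hfs : Summable (fun x => f x) := Summable.of_norm (summable_of_L1 f)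
  have hhs : Summable (fun x => h x) := Summable.of_norm (summable_of_L1 h)
  have hcoe : ∀ x, (a • f + b • h) x = a * f x + b * h x := by
    intro x; simp [lp.coeFn_add, lp.coeFn_smul]; rfl
  constructor
  · intro x
    rw [hcoe x]
    have := hf.1 x; have := hh.1 x
    positivity
  · rw [tsum_congr hcoe, Summable.tsum_add (hfs.mul_left a) (hhs.mul_left b),
      tsum_mul_left, tsum_mul_left, hf.2, hh.2]
    simpa using hab

/-- Left translation of a bounded function on `G` by `g`: `(g·f)(h) = f(g⁻¹h)`. -/
noncomputable def translateInfty (g : G) (f : lp (fun _ : G => ℝ) ∞) :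
    lp (fun _ : G => ℝ) ∞ :=
  ⟨fun h => f (g⁻¹ * h), by
    apply memℓp_infty
    refine (memℓp_infty_iff.1 (lp.memℓp f)).mono ?_
    rintro x ⟨h, rfl⟩
    exact ⟨g⁻¹ * h, rfl⟩⟩

/-- A discrete group `G` is amenable if there is a left-invariant mean on `ℓ∞(G)`:
a linear functional which is positive, normalized at the constant function `1`,
and invariant under left translation. -/
def IsAmenable (G : Type*) [Group G] : Prop :=
  ∃ m : lp (fun _ : G => ℝ) ∞ →ₗ[ℝ] ℝ,
    (∀ f : lp (fun _ : G => ℝ) ∞, (∀ x : G, 0 ≤ f x) → 0 ≤ m f) ∧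
    m 1 = 1 ∧
    ∀ (g : G) (f : lp (fun _ : G => ℝ) ∞), m (translateInfty g f) = m f

lemma norm_delta1 (x : G) : ‖delta1 x‖ = 1 := by
  letI := Classical.decEq G
  have := lp.norm_single (E := fun _ : G => ℝ) (p := 1) (by norm_num)
    x (1:ℝ)
  simpa [delta1] using this

lemma day (hG : IsAmenable G) {n : ℕ} (g : Fin n → G) {ε : ℝ} (hε : 0 < ε) :
    ∃ f : L1 G, (∀ x, 0 ≤ f x) ∧ (∑' x, f x = 1) ∧
      ∀ i, ‖trans1 (g i) f - f‖ < ε := by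
  classical
  obtain ⟨m, hpos, hone, hinv⟩ := hG
  set Ψ : L1 G →L[ℝ] (Fin n → L1 G) :=
    ContinuousLinearMap.pi (fun i =>
      ((trans1 (g i)).toContinuousLinearEquiv.toContinuousLinearMap
        - ContinuousLinearMap.id ℝ (L1 G))) with hΨ
  have hΨapp : ∀ (f : L1 G) (i : Fin n), Ψ f i = trans1 (g i) f - f := fun f i => rfl
  have h0 : (0 : Fin n → L1 G) ∈ closure (Ψ '' probSet G) := by
    by_contra h0n
    have hconv : Convex ℝ (closure (Ψ '' probSet G)) := by
      have := (convex_probSet (G := G)).linear_image (Ψ.toLinearMap)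
      exact this.closure
    obtain ⟨L, u, hLu, hsep⟩ :=
      geometric_hahn_banach_point_closed hconv isClosed_closure h0n
    have hu : 0 < u := by simpa using hLu
    have key : ∀ h : G,
        u < ∑ i : Fin n,
          (L (Pi.single i (delta1 (g i * h))) - L (Pi.single i (delta1 h))) := by
      intro h
      have hmem : Ψ (delta1 h) ∈ closure (Ψ '' probSet G) :=
        subset_closure ⟨delta1 h, delta1_mem_probSet h, rfl⟩
      calc u < L (Ψ (delta1 h)) := hsep _ hmem
        _ = _ := by
          conv_lhs => rw [← Finset.univ_sum_single (Ψ (delta1 h)), map_sum]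
          refine Finset.sum_congr rfl fun i _ => ?_
          rw [hΨapp, ← trans1_delta1, ← map_sub L]
          congr 1
          ext j
          by_cases hj : j = i
          · subst hj; simp
          · simp [Pi.single_eq_of_ne hj]
    have hbd : ∀ i : Fin n, Memℓp (fun x : G => L (Pi.single i (delta1 x))) ∞ := by
      intro i
      apply memℓp_infty
      refine ⟨‖L‖, ?_⟩
      rintro r ⟨x, rfl⟩
      calc ‖L (Pi.single i (delta1 x))‖
            ≤ ‖L‖ * ‖(Pi.single i (delta1 x) : Fin n → L1 G)‖ := L.le_opNorm _
        _ = ‖L‖ * ‖delta1 x‖ := by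
            rw [Pi.norm_single (G := fun _ : Fin n => L1 G) (delta1 x)]
        _ = ‖L‖ := by rw [norm_delta1, mul_one]
    set Φ : Fin n → lp (fun _ : G => ℝ) ∞ := fun i => ⟨_, hbd i⟩ with hΦ
    have hΦapp : ∀ (i : Fin n) (x : G), Φ i x = L (Pi.single i (delta1 x)) := fun i x => rfl
    set ψ : lp (fun _ : G => ℝ) ∞ :=
      ∑ i : Fin n, (translateInfty (g i)⁻¹ (Φ i) - Φ i) with hψ
    have hmψ : m ψ = 0 := by
      rw [hψ, map_sum]
      refine Finset.sum_eq_zero fun i _ => ?_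
      rw [map_sub, hinv]
      ring
    have hψapp : ∀ h : G, ψ h =
        ∑ i : Fin n, (L (Pi.single i (delta1 (g i * h))) - L (Pi.single i (delta1 h))) := by
      intro h
      rw [hψ]
      rw [lp.coeFn_sum]
      rw [Finset.sum_apply]
      refine Finset.sum_congr rfl fun i _ => ?_
      have : (translateInfty (g i)⁻¹ (Φ i) - Φ i) h
          = Φ i ((g i)⁻¹⁻¹ * h) - Φ i h := by
        rw [lp.coeFn_sub]; rfl
      rw [this, inv_inv, hΦapp, hΦapp]
    have hnn : ∀ x : G, 0 ≤ (ψ - u • 1) x := by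
      intro x
      have h1x : ((1 : lp (fun _ : G => ℝ) ∞) : G → ℝ) x = 1 := rfl
      have : (ψ - u • 1) x = ψ x - u := by
        rw [lp.coeFn_sub, Pi.sub_apply, lp.coeFn_smul, Pi.smul_apply, h1x,
          smul_eq_mul, mul_one]
      rw [this, hψapp x]
      have := key x
      linarith
    have := hpos _ hnn
    rw [map_sub, map_smul, hmψ, hone] at this
    simp at this
    linarith
  rw [Metric.mem_closure_iff] at h0
  obtain ⟨y, ⟨f, hfK, rfl⟩, hd⟩ := h0 ε hε
  refine ⟨f, hfK.1, hfK.2, fun i => ?_⟩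
  have h1 : ‖Ψ f‖ < ε := by rwa [dist_zero_left] at hd
  calc ‖trans1 (g i) f - f‖ = ‖Ψ f i‖ := by rw [hΨapp]
    _ ≤ ‖Ψ f‖ := norm_le_pi_norm _ i
    _ < ε := h1

lemma sqrt_sub_sq_le_abs {a b : ℝ} (ha : 0 ≤ a) (hb : 0 ≤ b) :
    (Real.sqrt a - Real.sqrt b) ^ 2 ≤ |a - b| := by
  rcases le_total b a with hab | hab
  · rw [abs_of_nonneg (by linarith)]
    have hs := Real.sqrt_le_sqrt hab
    nlinarith [Real.sq_sqrt ha, Real.sq_sqrt hb, Real.sqrt_nonneg a, Real.sqrt_nonneg b,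
      mul_nonneg (Real.sqrt_nonneg b) (sub_nonneg.2 hs)]
  · rw [abs_of_nonpos (by linarith)]
    have hs := Real.sqrt_le_sqrt hab
    nlinarith [Real.sq_sqrt ha, Real.sq_sqrt hb, Real.sqrt_nonneg a, Real.sqrt_nonneg b,
      mul_nonneg (Real.sqrt_nonneg a) (sub_nonneg.2 hs)]

lemma norm_sq_complex_sqrt (c : ℝ) (hc : 0 ≤ c) :
    ‖((Real.sqrt c : ℝ) : ℂ)‖ ^ (2 : ℝ≥0∞).toReal = c := by
  rw [Complex.norm_real, Real.norm_eq_abs, abs_of_nonneg (Real.sqrt_nonneg _)]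
  have h2 : ((2:ℝ≥0∞)).toReal = ((2:ℕ):ℝ) := by norm_num
  rw [h2, Real.rpow_natCast, Real.sq_sqrt hc]

lemma memℓp_sqrt (f : L1 G) (hf : ∀ x, 0 ≤ f x) :
    Memℓp (fun x => ((Real.sqrt (f x) : ℝ) : ℂ)) 2 := by
  apply memℓp_gen
  refine (summable_congr fun x => norm_sq_complex_sqrt (f x) (hf x)).2 ?_
  have := Summable.of_norm (summable_of_L1 f)
  exact this

lemma norm_sqrtL2 (f : L1 G) (hf : ∀ x, 0 ≤ f x) (hf1 : ∑' x, f x = 1) :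
    ‖(⟨fun x => ((Real.sqrt (f x) : ℝ) : ℂ), memℓp_sqrt f hf⟩ : L2 G)‖ = 1 := by
  set u : L2 G := ⟨fun x => ((Real.sqrt (f x) : ℝ) : ℂ), memℓp_sqrt f hf⟩ with hu
  have h2 : (0:ℝ) < (2:ℝ≥0∞).toReal := by norm_num
  have key : ‖u‖ ^ (2:ℝ≥0∞).toReal = 1 := by
    rw [lp.norm_rpow_eq_tsum h2]
    rw [tsum_congr (fun x => norm_sq_complex_sqrt (f x) (hf x))]
    exact hf1
  have h2' : ((2:ℝ≥0∞)).toReal = ((2:ℕ):ℝ) := by norm_num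
  rw [h2', Real.rpow_natCast] at key
  calc ‖u‖ = Real.sqrt (‖u‖ ^ 2) := (Real.sqrt_sq (norm_nonneg u)).symm
    _ = 1 := by rw [key, Real.sqrt_one]

lemma lam_sqrt_est (g₀ : G) (f : L1 G) (hf : ∀ x, 0 ≤ f x) :
    ‖lam g₀ (⟨fun x => ((Real.sqrt (f x) : ℝ) : ℂ), memℓp_sqrt f hf⟩ : L2 G)
      - (⟨fun x => ((Real.sqrt (f x) : ℝ) : ℂ), memℓp_sqrt f hf⟩ : L2 G)‖ ^ (2:ℕ)
      ≤ ‖trans1 g₀ f - f‖ := by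
  set u : L2 G := ⟨fun x => ((Real.sqrt (f x) : ℝ) : ℂ), memℓp_sqrt f hf⟩ with hu
  have h2 : (0:ℝ) < (2:ℝ≥0∞).toReal := by norm_num
  have h1 : (0:ℝ) < (1:ℝ≥0∞).toReal := by norm_num
  have hcoe : ∀ x : G, ((lam g₀ u - u : L2 G) : G → ℂ) x
      = (((Real.sqrt (f (g₀⁻¹ * x)) - Real.sqrt (f x) : ℝ)) : ℂ) := by
    intro x
    rw [lp.coeFn_sub, Pi.sub_apply]
    push_cast
    rfl
  have hcoe1 : ∀ x : G, ((trans1 g₀ f - f : L1 G) : G → ℝ) x = f (g₀⁻¹ * x) - f x := by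
    intro x; rw [lp.coeFn_sub, Pi.sub_apply, trans1_apply]
  have hterm : ∀ x : G, ‖((lam g₀ u - u : L2 G) : G → ℂ) x‖ ^ (2:ℝ≥0∞).toReal
      ≤ ‖((trans1 g₀ f - f : L1 G) : G → ℝ) x‖ := by
    intro x
    rw [hcoe x, hcoe1 x, Complex.norm_real, Real.norm_eq_abs, Real.norm_eq_abs]
    have h2' : ((2:ℝ≥0∞)).toReal = ((2:ℕ):ℝ) := by norm_num
    rw [h2', Real.rpow_natCast, sq_abs]
    exact sqrt_sub_sq_le_abs (hf _) (hf _)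
  have hsumL : Summable fun x => ‖((lam g₀ u - u : L2 G) : G → ℂ) x‖ ^ (2:ℝ≥0∞).toReal :=
    (lp.memℓp (lam g₀ u - u)).summable h2
  have hsumR : Summable fun x => ‖((trans1 g₀ f - f : L1 G) : G → ℝ) x‖ :=
    summable_of_L1 _
  have hts := Summable.tsum_le_tsum hterm hsumL hsumR
  have hL : ‖lam g₀ u - u‖ ^ (2:ℝ≥0∞).toReal
      = ∑' x, ‖((lam g₀ u - u : L2 G) : G → ℂ) x‖ ^ (2:ℝ≥0∞).toReal :=
    lp.norm_rpow_eq_tsum h2 _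
  have hR : ‖trans1 g₀ f - f‖ = ∑' x, ‖((trans1 g₀ f - f : L1 G) : G → ℝ) x‖ := by
    have := lp.norm_rpow_eq_tsum h1 (trans1 g₀ f - f)
    simpa using this
  have h2' : ((2:ℝ≥0∞)).toReal = ((2:ℕ):ℝ) := by norm_num
  rw [h2', Real.rpow_natCast] at hL
  rw [hL, hR]
  exact hts

/-- if for some `g₁, …, gₙ` in a countable discrete group `G` one has
`‖λ(g₁) + ⋯ + λ(gₙ)‖/n < 1`, then `G` is not amenable. -/
theorem statement6 {G : Type*} [Group G] [Countable G] (n : ℕ) (hn : 0 < n)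
    (g : Fin n → G) (h : ‖∑ i : Fin n, lam (g i)‖ / (n : ℝ) < 1) :
    ¬ IsAmenable G := by
  intro hG
  set T : L2 G →L[ℂ] L2 G := ∑ i : Fin n, lam (g i) with hT
  have hn' : (0:ℝ) < n := by exact_mod_cast hn
  have hTn : ‖T‖ < n := by rwa [div_lt_one hn'] at h
  set ε : ℝ := (n - ‖T‖) / n with hεdef
  have hεpos : 0 < ε := div_pos (by linarith) hn'
  have hnε : (n:ℝ) * ε = n - ‖T‖ := by
    rw [hεdef, mul_div_cancel₀ _ (ne_of_gt hn')]
  obtain ⟨f, hf1, hf2, hf3⟩ := day hG g (mul_pos hεpos hεpos)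
  set u : L2 G := ⟨fun x => ((Real.sqrt (f x) : ℝ) : ℂ), memℓp_sqrt f hf1⟩ with hudef
  have hu1 : ‖u‖ = 1 := norm_sqrtL2 f hf1 hf2
  have hui : ∀ i, ‖lam (g i) u - u‖ < ε := by
    intro i
    have h2 := lam_sqrt_est (g i) f hf1
    have h3 := hf3 i
    nlinarith [norm_nonneg (lam (g i) u - u)]
  have hTu_le : ‖T u‖ ≤ ‖T‖ := by
    have := T.le_opNorm u
    rwa [hu1, mul_one] at this
  have hsum_u : ‖∑ _i : Fin n, u‖ = n := by
    rw [Finset.sum_const, Finset.card_univ, Fintype.card_fin,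
      ← Nat.cast_smul_eq_nsmul ℂ n u, norm_smul]
    simp [hu1]
  have hdiff : (∑ _i : Fin n, u) - T u = ∑ i : Fin n, (u - lam (g i) u) := by
    rw [Finset.sum_sub_distrib, hT, ContinuousLinearMap.sum_apply]
  have hne : (Finset.univ : Finset (Fin n)).Nonempty := by
    haveI : NeZero n := ⟨Nat.pos_iff_ne_zero.1 hn⟩
    exact Finset.univ_nonempty
  have hstrict : ∑ i : Fin n, ‖u - lam (g i) u‖ < n * ε := by
    have := Finset.sum_lt_sum_of_nonempty hne
      (f := fun i => ‖u - lam (g i) u‖) (g := fun _ => ε)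
      (fun i _ => by show ‖u - lam (g i) u‖ < ε; rw [norm_sub_rev]; exact hui i)
    simpa [Finset.sum_const, Finset.card_univ, nsmul_eq_mul] using this
  have hmain : (n:ℝ) - ‖T u‖ ≤ ∑ i : Fin n, ‖u - lam (g i) u‖ := by
    calc (n:ℝ) - ‖T u‖ = ‖∑ _i : Fin n, u‖ - ‖T u‖ := by rw [hsum_u]
      _ ≤ ‖(∑ _i : Fin n, u) - T u‖ := norm_sub_norm_le _ _
      _ = ‖∑ i : Fin n, (u - lam (g i) u)‖ := by rw [hdiff]
      _ ≤ ∑ i : Fin n, ‖u - lam (g i) u‖ := norm_sum_le _ _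
  linarith
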